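/- Let G be a countable group, let A be a finite alphabet, and let Y ⊆ A^G be a subshift that is strongly irreducible witnessed by a finite set K ⊆ G with e ∈ K. Then for any finite subset F ⊆ G and any points y₁, y₂ ∈ Y, there is a point y ∈ Y such that y(g) = y₁(g) for all g ∈ F and y(g) = y₂(g) for all g ∈ G \ KF. -/
import Mathlib


open Pointwise

/-- The shift action of a group `G` on `G → A`: `σ^g(x)(h) = x(hg)`. -/
def shiftMap {G A : Type*} [Group G] (g : G) (x : G → A) : G → A := fun h => x (h * g)

/-- A subshift: a closed, shift-invariant subset of the full shift `A^G`. -/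
def IsSubshift {G A : Type*} [Group G] [TopologicalSpace A] (X : Set (G → A)) : Prop :=
  IsClosed X ∧ ∀ g : G, shiftMap g '' X = X

/-- `P(F, X)`: the set of patterns of shape `F` appearing in points of `X`,
i.e. the restrictions of points of `X` to `F`. -/
def patterns {G A : Type*} [Group G] (F : Finset G) (X : Set (G → A)) : Set (F → A) :=
  (fun x => fun f : F => x ↑f) '' X

/-- `Y` is strongly irreducible witnessed by the finite set `K ∋ e`: any two allowed patterns
on finite sets `F₁, F₂` with `KF₁ ∩ F₂ = ∅` appear jointly in a single point of `Y`. -/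
def IsStronglyIrreducibleWitnessedBy {G A : Type*} [Group G] [DecidableEq G]
    (Y : Set (G → A)) (K : Finset G) : Prop :=
  (1 : G) ∈ K ∧
    ∀ F₁ F₂ : Finset G, Disjoint (K * F₁) F₂ →
      ∀ p₁ ∈ patterns F₁ Y, ∀ p₂ ∈ patterns F₂ Y,
        ∃ y ∈ Y, (fun f : F₁ => y ↑f) = p₁ ∧ (fun f : F₂ => y ↑f) = p₂

/-- If `Y` is a strongly irreducible subshift witnessed by `K ∋ e`, then for
any finite `F ⊆ G` and `y₁, y₂ ∈ Y` there is `y ∈ Y` agreeing with `y₁` on `F` and with `y₂`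
on `G \ KF`. -/
theorem strongly_irreducible_patch_mixing {G A : Type*} [Group G] [Countable G] [DecidableEq G]
    [Fintype A] [Nonempty A] [TopologicalSpace A] [DiscreteTopology A]
    (Y : Set (G → A)) (hY : IsSubshift Y) (K : Finset G)
    (hSI : IsStronglyIrreducibleWitnessedBy Y K)
    (F : Finset G) (y₁ y₂ : G → A) (hy₁ : y₁ ∈ Y) (hy₂ : y₂ ∈ Y) :
    ∃ y ∈ Y, (∀ g ∈ F, y g = y₁ g) ∧ (∀ g : G, g ∉ K * F → y g = y₂ g) := by
  -- family of closed nonempty sets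
  set C : Finset G → Set (G → A) := fun E =>
    {y | y ∈ Y ∧ (∀ g ∈ F, y g = y₁ g) ∧ (∀ g ∈ E, g ∉ K * F → y g = y₂ g)} with hC
  have hmono : ∀ E₁ E₂ : Finset G, E₁ ⊆ E₂ → C E₂ ⊆ C E₁ := by
    intro E₁ E₂ hsub y hy
    exact ⟨hy.1, hy.2.1, fun g hg => hy.2.2 g (hsub hg)⟩
  have hdir : Directed (· ⊇ ·) C := by
    intro E₁ E₂
    exact ⟨E₁ ∪ E₂, hmono _ _ Finset.subset_union_left,
      hmono _ _ Finset.subset_union_right⟩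
  have hclosed : ∀ E : Finset G, IsClosed (C E) := by
    intro E
    have h1 : IsClosed {y : G → A | y ∈ Y} := hY.1
    have h2 : IsClosed {y : G → A | ∀ g ∈ F, y g = y₁ g} := by
      have : {y : G → A | ∀ g ∈ F, y g = y₁ g} = ⋂ g ∈ F, {y | y g = y₁ g} := by
        ext y; simp
      rw [this]
      exact isClosed_biInter fun g _ => isClosed_eq (continuous_apply g) continuous_const
    have h3 : IsClosed {y : G → A | ∀ g ∈ E, g ∉ K * F → y g = y₂ g} := by
      have : {y : G → A | ∀ g ∈ E, g ∉ K * F → y g = y₂ g} =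
          ⋂ g ∈ E, ⋂ _ : g ∉ K * F, {y | y g = y₂ g} := by
        ext y; simp
      rw [this]
      exact isClosed_biInter fun g _ => isClosed_iInter fun _ =>
        isClosed_eq (continuous_apply g) continuous_const
    have : C E = {y : G → A | y ∈ Y} ∩ ({y | ∀ g ∈ F, y g = y₁ g} ∩
        {y | ∀ g ∈ E, g ∉ K * F → y g = y₂ g}) := by
      ext y; simp only [hC, Set.mem_inter_iff, Set.mem_setOf_eq]
    rw [this]
    exact h1.inter (h2.inter h3)
  have hnonempty : ∀ E : Finset G, (C E).Nonempty := by
    intro E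
    have hdisj : Disjoint (K * F) (E \ (K * F)) := Finset.disjoint_sdiff
    obtain ⟨y, hyY, h1, h2⟩ := hSI.2 F (E \ (K * F)) hdisj
      (fun f : F => y₁ ↑f) ⟨y₁, hy₁, rfl⟩
      (fun f : (E \ (K * F) : Finset G) => y₂ ↑f) ⟨y₂, hy₂, rfl⟩
    refine ⟨y, hyY, fun g hg => congrFun h1 ⟨g, hg⟩, fun g hgE hgKF =>
      congrFun h2 ⟨g, Finset.mem_sdiff.2 ⟨hgE, hgKF⟩⟩⟩
  have hcompact : ∀ E : Finset G, IsCompact (C E) := fun E =>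
    (hclosed E).isCompact
  obtain ⟨y, hy⟩ := IsCompact.nonempty_iInter_of_directed_nonempty_isCompact_isClosed
    C hdir hnonempty hcompact hclosed
  simp only [Set.mem_iInter] at hy
  refine ⟨y, (hy ∅).1, (hy ∅).2.1, fun g hg => (hy {g}).2.2 g (Finset.mem_singleton_self g) hg⟩
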